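/- arXiv:cs/0009028 — 4 statements merged into one kernel-verified Lean document; each statement's English description precedes it below -/
import Mathlib

section
/- Let C₃ : ℕ → ℚ satisfy C₃(3) = 0 and C₃(3k) = 3·C₃(k) + 3k·f(k) + 3·i(k,k) for all k ≥ 1, where f(k) = k³/6 − k²/2 + k/3 and i(k,k) = (k(k−1)/2)². Then for all n = 3^j with j ≥ 1, C₃(n) = (5/312)n⁴ − (1/8)n³ + (7/24)n² − (19/104)n. -/
theorem stmt_3 (C₃ : ℕ → ℚ)
    (hbase : C₃ 3 = 0)
    (hrec : ∀ k : ℕ, 1 ≤ k →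
      C₃ (3 * k) = 3 * C₃ k
        + 3 * (k : ℚ) * ((k : ℚ)^3 / 6 - (k : ℚ)^2 / 2 + (k : ℚ) / 3)
        + 3 * ((k : ℚ) * ((k : ℚ) - 1) / 2)^2) :
    ∀ j : ℕ, 1 ≤ j →
      C₃ (3 ^ j) = (5/312) * ((3:ℚ)^j)^4 - (1/8) * ((3:ℚ)^j)^3
        + (7/24) * ((3:ℚ)^j)^2 - (19/104) * ((3:ℚ)^j) := by
  intro j hj
  induction j with
  | zero => omega
  | succ n ih =>
    rcases Nat.eq_or_lt_of_le hj with h | h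
    · have : n = 0 := by omega
      subst this
      norm_num [hbase]
    · have hn : 1 ≤ n := by omega
      have ihn := ih hn
      have hk : 1 ≤ 3 ^ n := Nat.one_le_pow _ _ (by norm_num)
      have := hrec (3 ^ n) hk
      rw [pow_succ, mul_comm ((3:ℕ)^n) 3, this, ihn]
      push_cast
      ring
end

section
/- Let C₄ : ℕ → ℚ satisfy C₄(4) = 0 and C₄(4k) = 4·C₄(k) + 6·i(k,k) + 6k·f(k) + 4·e(k,k,k) for all k ≥ 1, where f(k) = k³/6 − k²/2 + k/3, i(k,k) = (k(k−1)/2)², and e(k,k,k) = k³(k−1)/2. Then for all n = 4^j with j ≥ 1, C₄(n) = (1/56)n⁴ − (2/15)n³ + (7/24)n² − (37/210)n. -/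
theorem stmt_5 (C₄ : ℕ → ℚ)
    (hbase : C₄ 4 = 0)
    (hrec : ∀ k : ℕ, 1 ≤ k →
      C₄ (4 * k) = 4 * C₄ k
        + 6 * ((k : ℚ) * ((k : ℚ) - 1) / 2)^2
        + 6 * (k : ℚ) * ((k : ℚ)^3 / 6 - (k : ℚ)^2 / 2 + (k : ℚ) / 3)
        + 4 * ((k : ℚ)^3 * ((k : ℚ) - 1) / 2)) :
    ∀ j : ℕ, 1 ≤ j →
      C₄ (4 ^ j) = (1/56) * ((4:ℚ)^j)^4 - (2/15) * ((4:ℚ)^j)^3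
        + (7/24) * ((4:ℚ)^j)^2 - (37/210) * ((4:ℚ)^j) := by
  intro j hj
  induction j with
  | zero => omega
  | succ n ih =>
    rcases Nat.eq_or_lt_of_le hj with h | h
    · simp only [← h]
      norm_num [hbase]
    · have hn : 1 ≤ n := by omega
      have ih' := ih hn
      have h1 : (4:ℕ) ^ (n+1) = 4 * 4 ^ n := by ring
      have hk : (1:ℕ) ≤ 4 ^ n := Nat.one_le_pow _ _ (by norm_num)
      have := hrec (4 ^ n) hk
      rw [h1, this, ih']
      push_cast
      ring
end

section
/- Let C₅ : ℕ → ℚ satisfy C₅(5) = 1 and C₅(5k) = 5·C₅(k) + 10·i(k,k) + 10k·f(k) + 10·e(k,k,k) + k⁴ for all k ≥ 1, where f(k) = k³/6 − k²/2 + k/3, i(k,k) = (k(k−1)/2)², and e(k,k,k) = k³(k−1)/2. Then for all n = 5^j with j ≥ 1, C₅(n) = (61/3720)n⁴ − (1/8)n³ + (7/24)n² − (227/1240)n. -/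
theorem stmt_6 (C₅ : ℕ → ℚ)
    (hbase : C₅ 5 = 1)
    (hrec : ∀ k : ℕ, 1 ≤ k →
      C₅ (5 * k) = 5 * C₅ k
        + 10 * ((k : ℚ) * ((k : ℚ) - 1) / 2)^2
        + 10 * (k : ℚ) * ((k : ℚ)^3 / 6 - (k : ℚ)^2 / 2 + (k : ℚ) / 3)
        + 10 * ((k : ℚ)^3 * ((k : ℚ) - 1) / 2)
        + (k : ℚ)^4) :
    ∀ j : ℕ, 1 ≤ j →
      C₅ (5 ^ j) = (61/3720) * ((5:ℚ)^j)^4 - (1/8) * ((5:ℚ)^j)^3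
        + (7/24) * ((5:ℚ)^j)^2 - (227/1240) * ((5:ℚ)^j) := by
  intro j hj
  induction j with
  | zero => omega
  | succ n ih =>
    rcases Nat.eq_or_lt_of_le hj with h | h
    · simp [← h, hbase]
      norm_num
    · have hn : 1 ≤ n := by omega
      have hk : (1:ℕ) ≤ 5 ^ n := Nat.one_le_pow _ _ (by norm_num)
      have := hrec (5 ^ n) hk
      rw [pow_succ, mul_comm, this, ih hn]
      push_cast
      ring
end

section
/- Define f_top(n) and f_bot(n) by f_top(3) = 0, f_bot(3) = 1, and for n = 3k: f_top(n) = 3[f_top(k) + e(k,k,1)] and f_bot(n) = 3[f_bot(k) + e(k,k,1)] + k³, where e(k,k,1) = k(k−1)/2·k = k²(k−1)/2. Then for all n = 3^j with j ≥ 1, f_top(n) = n³/16 − n²/4 + 3n/16 and f_bot(n) = 5n³/48 − n²/4 + 7n/48. -/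
theorem stmt_9 (ftop fbot : ℕ → ℚ)
    (htop3 : ftop 3 = 0) (hbot3 : fbot 3 = 1)
    (htoprec : ∀ k : ℕ, 1 ≤ k →
      ftop (3 * k) = 3 * (ftop k + (k : ℚ)^2 * ((k : ℚ) - 1) / 2))
    (hbotrec : ∀ k : ℕ, 1 ≤ k →
      fbot (3 * k) = 3 * (fbot k + (k : ℚ)^2 * ((k : ℚ) - 1) / 2) + (k : ℚ)^3) :
    ∀ j : ℕ, 1 ≤ j →
      ftop (3 ^ j) = ((3:ℚ)^j)^3 / 16 - ((3:ℚ)^j)^2 / 4 + 3 * ((3:ℚ)^j) / 16 ∧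
      fbot (3 ^ j) = 5 * ((3:ℚ)^j)^3 / 48 - ((3:ℚ)^j)^2 / 4 + 7 * ((3:ℚ)^j) / 48 := by
  intro j hj
  induction j with
  | zero => omega
  | succ n ih =>
    rcases Nat.eq_or_lt_of_le hj with h | h
    · have : n = 0 := by omega
      subst this
      norm_num
      exact ⟨htop3, hbot3⟩
    · have hn : 1 ≤ n := by omega
      obtain ⟨h1, h2⟩ := ih hn
      have hk : 1 ≤ 3 ^ n := Nat.one_le_pow _ _ (by norm_num)
      have e1 := htoprec (3 ^ n) hk
      have e2 := hbotrec (3 ^ n) hk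
      have hc : ((3 ^ n : ℕ) : ℚ) = (3:ℚ)^n := by push_cast; ring
      rw [hc] at e1 e2
      have h3 : (3:ℕ) * 3 ^ n = 3 ^ (n+1) := by ring
      rw [h3] at e1 e2
      constructor
      · rw [e1, h1]; ring
      · rw [e2, h2]; ring
end
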